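/- Let M ⊂ Z_d^{2n} be a Lagrangian subspace. Then the set of vectors {|M,v⟩ : v ranging over a set of coset representatives of V/M} is an orthonormal basis of (C^d)^{⊗n}; in particular |M,u⟩ = |M,v⟩ (up to phase) iff u - v ∈ M, and ⟨M,u|M,v⟩ = 0 otherwise. -/

import Mathlib

noncomputable section

open scoped Classical

/-- The phase space `V = ℤ_d^n × ℤ_d^n ≃ ℤ_d^{2n}` (momentum and position parts). -/
abbrev PhaseSpace (d n : ℕ) := (Fin n → ZMod d) × (Fin n → ZMod d)

/-- The standard symplectic form `[u,v] = uᵀ J v` on `ℤ_d^{2n}`. -/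
def sform {d n : ℕ} (u v : PhaseSpace d n) : ZMod d :=
  ∑ i, (u.1 i * v.2 i - u.2 i * v.1 i)

/-- A Lagrangian (maximally isotropic) subspace of the phase space. -/
def IsLagrangian {d n : ℕ} (M : Submodule (ZMod d) (PhaseSpace d n)) : Prop :=
  (∀ x ∈ M, ∀ y ∈ M, sform x y = 0) ∧ Module.finrank (ZMod d) M = n

/-- `ω = e^{2πi/d}`. -/
def omegaC (d : ℕ) : ℂ := Complex.exp (2 * Real.pi * Complex.I / d)

/-- `τ = (-1)^d e^{πi/d}`. -/
def tauC (d : ℕ) : ℂ := (-1) ^ d * Complex.exp (Real.pi * Complex.I / d)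

/-- The `n`-qudit Weyl operator `w(p,q) = w(p₁,q₁) ⊗ ⋯ ⊗ w(pₙ,qₙ)` on `(ℂ^d)^{⊗n}`,
written out in matrix entries: `w(p,q)_{x,y} = τ^{-Σᵢ pᵢqᵢ} ω^{p·x} δ_{x,y+q}`
(the exponent of `τ` being computed in the integers from representatives). -/
def weylN (d n : ℕ) (v : PhaseSpace d n) :
    Matrix (Fin n → ZMod d) (Fin n → ZMod d) ℂ := fun x y =>
  (tauC d ^ (-((∑ i, (v.1 i).val * (v.2 i).val : ℕ) : ℤ)))
    * omegaC d ^ ((∑ i, v.1 i * x i : ZMod d)).val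
    * (if x = y + v.2 then 1 else 0)

/-- The basis-dependent Weyl operators: given a basis `B = {u_i}` of a subspace
`M` and `m = Σ mᵢ uᵢ ∈ M`, set `w_B(m) = Πᵢ w(uᵢ)^{mᵢ}`. This turns `m ↦ w_B(m)`
into a true (non-projective) representation of `M` when `M` is isotropic. -/
def weylB {d n : ℕ} [NeZero d] {M : Submodule (ZMod d) (PhaseSpace d n)}
    {ι : Type*} [Fintype ι] (b : Module.Basis ι (ZMod d) M) (m : M) :
    Matrix (Fin n → ZMod d) (Fin n → ZMod d) ℂ :=
  ((Finset.univ : Finset ι).toList.map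
    (fun i => weylN d n ((b i : PhaseSpace d n)) ^ ((b.repr m) i).val)).prod

/-- The stabilizer-state operator `ρ_{M,v} = d^{-n} Σ_{m∈M} ω^{[v,m]} w_B(m)`. -/
def stabRho {d n : ℕ} [NeZero d] {M : Submodule (ZMod d) (PhaseSpace d n)}
    {ι : Type*} [Fintype ι] (b : Module.Basis ι (ZMod d) M) (v : PhaseSpace d n) :
    Matrix (Fin n → ZMod d) (Fin n → ZMod d) ℂ :=
  ((d : ℂ) ^ n)⁻¹ • ∑ᶠ m : M, omegaC d ^ (sform v (m : PhaseSpace d n)).val • weylB b m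

/- ================= auxiliary lemmas ================= -/

section Aux

variable {d n : ℕ} [NeZero d]

/-- ω^d = 1 -/
lemma omegaC_pow_d (d : ℕ) [NeZero d] : omegaC d ^ d = 1 := by
  have hd : (d:ℂ) ≠ 0 := Nat.cast_ne_zero.2 (NeZero.ne d)
  rw [omegaC, ← Complex.exp_nat_mul]
  have h : (d:ℂ) * (2 * Real.pi * Complex.I / d) = 2 * Real.pi * Complex.I := by
    field_simp
  rw [h, Complex.exp_two_pi_mul_I]

lemma tauC_sq (d : ℕ) : tauC d ^ 2 = omegaC d := by
  rw [tauC, omegaC, mul_pow, ← pow_mul, ← Complex.exp_nat_mul]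
  have h1 : ((-1:ℂ)) ^ (d*2) = 1 := by
    rw [mul_comm, pow_mul]; norm_num
  rw [h1, one_mul]
  ring_nf

lemma exp_pi_I' : Complex.exp (Real.pi * Complex.I) = -1 := by
  simpa using Complex.exp_pi_mul_I

lemma tauC_pow_d_sq (d : ℕ) [NeZero d] : tauC d ^ (d^2) = 1 := by
  have hd : (d:ℂ) ≠ 0 := Nat.cast_ne_zero.2 (NeZero.ne d)
  rw [tauC, mul_pow, ← pow_mul, ← Complex.exp_nat_mul]
  have h1 : (d^2 : ℕ) * (Real.pi * Complex.I / d) = (d:ℕ) * ((Real.pi:ℂ) * Complex.I) := by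
    push_cast; field_simp
  rw [h1, Complex.exp_nat_mul, exp_pi_I', ← pow_add]
  have he : Even (d*d^2 + d) := by
    rcases Nat.even_or_odd d with h | h
    · exact Even.add (h.mul_right _) h
    · exact (h.mul h.pow).add_odd h
  exact he.neg_one_pow

/-- `ω^a` for `a : ZMod d`. -/
def omegaZ (d : ℕ) (a : ZMod d) : ℂ := omegaC d ^ a.val

lemma pow_eq_pow_mod_d {G : Type*} [Monoid G] {x : G} (h : x ^ d = 1) (k : ℕ) :
    x ^ k = x ^ (k % d) := by
  conv_lhs => rw [← Nat.div_add_mod k d, pow_add, pow_mul, h, one_pow, one_mul]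

lemma omegaZ_natCast (t : ℕ) : omegaZ d ((t : ZMod d)) = omegaC d ^ t := by
  rw [omegaZ, ZMod.val_natCast, ← pow_eq_pow_mod_d (omegaC_pow_d d)]

lemma omegaZ_add (a b : ZMod d) : omegaZ d (a + b) = omegaZ d a * omegaZ d b := by
  rw [omegaZ, ZMod.val_add, ← pow_eq_pow_mod_d (omegaC_pow_d d), pow_add]; rfl

lemma omegaZ_zero : omegaZ d (0 : ZMod d) = 1 := by simp [omegaZ]

lemma omegaC_ne_zero (d : ℕ) : omegaC d ≠ 0 := Complex.exp_ne_zero _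

lemma omegaZ_ne_zero (a : ZMod d) : omegaZ d a ≠ 0 := pow_ne_zero _ (omegaC_ne_zero d)

lemma zmod_val_cast_self (a : ZMod d) : ((a.val : ZMod d)) = a := by
  simp [ZMod.natCast_val, ZMod.cast_id]

lemma omegaZ_mul_natCast (k : ℕ) (a : ZMod d) :
    omegaZ d ((k : ZMod d) * a) = omegaZ d a ^ k := by
  have h : ((k : ZMod d)) * a = ((k * a.val : ℕ) : ZMod d) := by
    push_cast
    simp [ZMod.natCast_val, ZMod.cast_id]
  rw [h, omegaZ_natCast, pow_mul', omegaZ]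

lemma omegaZ_neg (a : ZMod d) : omegaZ d (-a) = (omegaZ d a)⁻¹ := by
  have h : omegaZ d (-a) * omegaZ d a = 1 := by
    rw [← omegaZ_add]; simp [omegaZ_zero]
  exact eq_inv_of_mul_eq_one_left h

lemma omegaZ_one_ne_one (hd : 1 < d) : omegaZ d (1 : ZMod d) ≠ 1 := by
  haveI := Fact.mk hd
  rw [omegaZ, ZMod.val_one _, pow_one, omegaC]
  intro h
  rw [Complex.exp_eq_one_iff] at h
  obtain ⟨k, hk⟩ := h
  have hd0 : (d:ℂ) ≠ 0 := Nat.cast_ne_zero.2 (by omega)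
  have hpi : (Real.pi:ℂ) ≠ 0 := by exact_mod_cast Real.pi_ne_zero
  have h2pi : (2 * Real.pi * Complex.I : ℂ) ≠ 0 := by
    simp [hpi, Complex.I_ne_zero]
  have hk' : 2 * (Real.pi:ℂ) * Complex.I = k * (2 * Real.pi * Complex.I) * d := by
    field_simp at hk; linear_combination (2 * (Real.pi:ℂ) * Complex.I) * hk
  have h1 : (2 * Real.pi * Complex.I : ℂ) * 1 = (2 * Real.pi * Complex.I) * ((k*d:ℤ):ℂ) := by
    push_cast; linear_combination hk'
  have h2 : ((1:ℤ):ℂ) = ((k*d:ℤ):ℂ) := by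
    have := mul_left_cancel₀ h2pi h1
    push_cast
    simpa using this
  have h3 : (1:ℤ) = k * d := by exact_mod_cast h2
  have hdvd : (d:ℤ) ∣ 1 := ⟨k, by linarith⟩
  have := Int.le_of_dvd one_pos hdvd
  omega

/-- character sum over a finite abelian group -/
lemma char_sum_eq_zero {W : Type*} [Fintype W] [AddCommGroup W] (hd : 1 < d)
    (φ : W → ZMod d) (hadd : ∀ a b, φ (a + b) = φ a + φ b) (w₀ : W) (h1 : φ w₀ = 1) :
    ∑ w, omegaZ d (φ w) = 0 := by
  have key : ∑ w, omegaZ d (φ (w + w₀)) = ∑ w, omegaZ d (φ w) :=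
    Fintype.sum_equiv (Equiv.addRight w₀) _ _ (fun w => rfl)
  simp only [hadd, h1, omegaZ_add] at key
  rw [← Finset.sum_mul] at key
  have hne : omegaZ d (1 : ZMod d) - 1 ≠ 0 := sub_ne_zero.mpr (omegaZ_one_ne_one hd)
  have : (∑ w, omegaZ d (φ w)) * (omegaZ d (1:ZMod d) - 1) = 0 := by
    rw [mul_sub, key, mul_one, sub_self]
  rcases mul_eq_zero.mp this with h | h
  · exact h
  · exact absurd h hne

end Aux
section Shift

variable {d n : ℕ} [NeZero d]

/-- phase times shift matrix -/
def shiftMat (d n : ℕ) [NeZero d] (c : ℂ) (p q : Fin n → ZMod d) :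
    Matrix (Fin n → ZMod d) (Fin n → ZMod d) ℂ := fun x y =>
  c * omegaZ d (∑ i, p i * x i) * (if x = y + q then 1 else 0)

lemma weylN_eq_shiftMat (v : PhaseSpace d n) :
    weylN d n v = shiftMat d n
      (tauC d ^ (-((∑ i, (v.1 i).val * (v.2 i).val : ℕ) : ℤ))) v.1 v.2 := by
  funext x y
  simp [weylN, shiftMat, omegaZ]

lemma shiftMat_one : shiftMat d n 1 0 0 = (1 : Matrix (Fin n → ZMod d) (Fin n → ZMod d) ℂ) := by
  funext x y
  simp [shiftMat, omegaZ_zero, Matrix.one_apply, eq_comm]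

lemma shiftMat_mul (c c' : ℂ) (p q p' q' : Fin n → ZMod d) :
    shiftMat d n c p q * shiftMat d n c' p' q'
      = shiftMat d n (c * c' * omegaZ d (-∑ i, p' i * q i)) (p + p') (q + q') := by
  funext x y
  rw [Matrix.mul_apply]
  rw [Finset.sum_eq_single (x - q)]
  · simp only [shiftMat]
    have h1 : x = (x - q) + q := by abel
    rw [if_pos h1]
    have h2 : (x - q = y + q') ↔ (x = y + (q + q')) := by
      rw [sub_eq_iff_eq_add, add_assoc, add_comm q' q]
    have h3 : omegaZ d (∑ i, p' i * (x - q) i)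
        = omegaZ d (∑ i, p' i * x i) * omegaZ d (-∑ i, p' i * q i) := by
      rw [← omegaZ_add]
      congr 1
      rw [← Finset.sum_neg_distrib, ← Finset.sum_add_distrib]
      apply Finset.sum_congr rfl
      intro i _
      simp [Pi.sub_apply]
      ring
    have h4 : omegaZ d (∑ i, (p + p') i * x i)
        = omegaZ d (∑ i, p i * x i) * omegaZ d (∑ i, p' i * x i) := by
      rw [← omegaZ_add]
      congr 1
      rw [← Finset.sum_add_distrib]
      apply Finset.sum_congr rfl
      intro i _
      simp [Pi.add_apply]
      ring
    rw [h3, h4]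
    by_cases h : x = y + (q + q')
    · rw [if_pos h, if_pos (h2.mpr h)]
      ring
    · rw [if_neg h, if_neg (fun hh => h (h2.mp hh))]
      ring
  · intro z _ hz
    simp only [shiftMat]
    have : ¬ (x = z + q) := by
      intro h
      apply hz
      rw [h]; abel
    rw [if_neg this]
    ring
  · intro h
    exact absurd (Finset.mem_univ _) h

end Shift
section Pow

variable {d n : ℕ} [NeZero d]

lemma weylN_pow_eq (u : PhaseSpace d n) (k : ℕ) :
    weylN d n u ^ k = shiftMat d n
      (((tauC d)⁻¹ ^ (∑ i, (u.1 i).val * (u.2 i).val)) ^ k *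
        ((omegaZ d (∑ i, u.1 i * u.2 i))⁻¹) ^ (∑ j ∈ Finset.range k, j))
      ((k : ZMod d) • u.1) ((k : ZMod d) • u.2) := by
  induction k with
  | zero =>
      simp [shiftMat_one]
  | succ k ih =>
      rw [pow_succ, ih, weylN_eq_shiftMat, shiftMat_mul]
      have harg1 : ((k:ZMod d) • u.1) + u.1 = (((k+1:ℕ)):ZMod d) • u.1 := by
        push_cast; rw [add_smul, one_smul]
      have harg2 : ((k:ZMod d) • u.2) + u.2 = (((k+1:ℕ)):ZMod d) • u.2 := by
        push_cast; rw [add_smul, one_smul]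
      rw [harg1, harg2]
      congr 1
      have hzpow : tauC d ^ (-((∑ i, (u.1 i).val * (u.2 i).val : ℕ) : ℤ))
          = ((tauC d)⁻¹) ^ (∑ i, (u.1 i).val * (u.2 i).val) := by
        rw [zpow_neg, zpow_natCast, inv_pow]
      have hsum : (∑ i, u.1 i * ((k:ZMod d) • u.2) i) = (k : ZMod d) * (∑ i, u.1 i * u.2 i) := by
        rw [Finset.mul_sum]
        apply Finset.sum_congr rfl
        intro i _
        simp [Pi.smul_apply, smul_eq_mul]
        ring
      rw [hzpow, hsum, ← omegaZ_neg, ← mul_neg, omegaZ_mul_natCast,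
        Finset.sum_range_succ, pow_add, pow_add, pow_succ]
      ring
end Pow
section PowD

variable {d n : ℕ} [NeZero d]

lemma weylN_pow_d (u : PhaseSpace d n) : weylN d n u ^ d = 1 := by
  rw [weylN_pow_eq]
  have h0 : ((d : ZMod d)) = 0 := ZMod.natCast_self d
  rw [h0, zero_smul, zero_smul]
  set su := ∑ i, (u.1 i).val * (u.2 i).val with hsu
  have hcast : (∑ i, u.1 i * u.2 i) = ((su : ℕ) : ZMod d) := by
    rw [hsu]
    push_cast
    simp [ZMod.natCast_val, ZMod.cast_id]
  have homega : omegaZ d (∑ i, u.1 i * u.2 i) = (tauC d ^ 2) ^ su := by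
    rw [hcast, omegaZ_natCast, tauC_sq]
  have hgauss : ∀ m : ℕ, 2 * (∑ j ∈ Finset.range m, j) + m = m^2 := by
    intro m
    induction m with
    | zero => simp
    | succ k ih => rw [Finset.sum_range_succ]; nlinarith [ih]
  have hc : ((tauC d)⁻¹ ^ su) ^ d *
      ((omegaZ d (∑ i, u.1 i * u.2 i))⁻¹) ^ (∑ j ∈ Finset.range d, j) = 1 := by
    set T := ∑ j ∈ Finset.range d, j with hTdef
    have harith : su * d + 2 * (su * T) = d^2 * su := by
      have h2 := hgauss d
      calc su * d + 2*(su * T) = su * (2 * T + d) := by ring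
        _ = su * d^2 := by rw [h2]
        _ = d^2 * su := by ring
    have e1 : ((tauC d)⁻¹ ^ su) ^ d = (tauC d)⁻¹ ^ (su * d) := by rw [← pow_mul]
    have e2 : ((omegaZ d (∑ i, u.1 i * u.2 i))⁻¹) ^ T = (tauC d)⁻¹ ^ (2 * (su * T)) := by
      rw [homega, ← pow_mul, ← inv_pow, ← pow_mul]
      congr 1
      ring
    rw [e1, e2, ← pow_add, harith, pow_mul, inv_pow, tauC_pow_d_sq, inv_one, one_pow]
  rw [hc, shiftMat_one]

lemma weylN_pow_val_add (u : PhaseSpace d n) (a b : ZMod d) :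
    weylN d n u ^ a.val * weylN d n u ^ b.val = weylN d n u ^ (a + b).val := by
  rw [← pow_add, pow_eq_pow_mod_d (weylN_pow_d u) (a.val + b.val), ZMod.val_add]

lemma weylN_commute {u v : PhaseSpace d n} (h : sform u v = 0) :
    Commute (weylN d n u) (weylN d n v) := by
  have hs : (∑ i, u.1 i * v.2 i) = (∑ i, v.1 i * u.2 i) := by
    have : (∑ i, (u.1 i * v.2 i - u.2 i * v.1 i)) = 0 := h
    rw [Finset.sum_sub_distrib] at this
    have := sub_eq_zero.mp this
    rw [this]
    apply Finset.sum_congr rfl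
    intro i _
    ring
  unfold Commute SemiconjBy
  rw [weylN_eq_shiftMat u, weylN_eq_shiftMat v, shiftMat_mul, shiftMat_mul]
  rw [add_comm v.1 u.1, add_comm v.2 u.2]
  congr 1
  rw [mul_comm (tauC d ^ _) (tauC d ^ _)]
  congr 1
  rw [show (-∑ i, v.1 i * u.2 i) = (-∑ i, u.1 i * v.2 i) from by rw [hs]]
end PowD
section Rep

variable {d n : ℕ} [NeZero d] {M : Submodule (ZMod d) (PhaseSpace d n)}
  {ι : Type*} [Fintype ι]

lemma list_prod_mul_comm {α G : Type*} [Monoid G] (F F' : α → G) :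
    ∀ l : List α, (∀ i ∈ l, ∀ j ∈ l, Commute (F i) (F' j)) →
      (l.map F).prod * (l.map F').prod = (l.map (fun i => F i * F' i)).prod := by
  intro l
  induction l with
  | nil => simp
  | cons a t ih =>
      intro h
      simp only [List.map_cons, List.prod_cons]
      have hcomm : Commute ((t.map F).prod) (F' a) := by
        apply Commute.list_prod_left
        intro x hx
        obtain ⟨i, hi, rfl⟩ := List.mem_map.mp hx
        exact h i (List.mem_cons_of_mem _ hi) a List.mem_cons_self
      calc F a * (t.map F).prod * (F' a * (t.map F').prod)
          = F a * ((t.map F).prod * F' a) * (t.map F').prod := by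
            rw [mul_assoc, mul_assoc, mul_assoc]
        _ = F a * (F' a * (t.map F).prod) * (t.map F').prod := by rw [hcomm.eq]
        _ = (F a * F' a) * ((t.map F).prod * (t.map F').prod) := by
            rw [mul_assoc, mul_assoc, mul_assoc]
        _ = (F a * F' a) * (t.map (fun i => F i * F' i)).prod := by
            rw [ih (fun i hi j hj =>
              h i (List.mem_cons_of_mem _ hi) j (List.mem_cons_of_mem _ hj))]

lemma weylB_mul (hM : ∀ x ∈ M, ∀ y ∈ M, sform x y = 0) (b : Module.Basis ι (ZMod d) M) (m m' : M) :
    weylB b m * weylB b m' = weylB b (m + m') := by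
  unfold weylB
  rw [list_prod_mul_comm _ _ _ (fun i _ j _ =>
    ((weylN_commute (hM _ (b i).2 _ (b j).2)).pow_pow _ _))]
  congr 1
  apply List.map_congr_left
  intro i _
  rw [map_add, Finsupp.add_apply]
  exact weylN_pow_val_add _ _ _

lemma weylB_zero (b : Module.Basis ι (ZMod d) M) : weylB b 0 = 1 := by
  unfold weylB
  apply List.prod_eq_one
  intro x hx
  obtain ⟨i, hi, rfl⟩ := List.mem_map.mp hx
  simp

lemma weylB_eq_shiftMat (b : Module.Basis ι (ZMod d) M) (m : M) :
    ∃ c : ℂ, weylB b m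
      = shiftMat d n c ((m : PhaseSpace d n).1) ((m : PhaseSpace d n).2) := by
  have key : ∀ l : List ι, ∃ c : ℂ,
      (l.map (fun i => weylN d n ((b i : PhaseSpace d n)) ^ ((b.repr m) i).val)).prod
        = shiftMat d n c
          ((l.map (fun i => (b.repr m i) • ((b i : PhaseSpace d n)).1)).sum)
          ((l.map (fun i => (b.repr m i) • ((b i : PhaseSpace d n)).2)).sum) := by
    intro l
    induction l with
    | nil => exact ⟨1, by simp [shiftMat_one]⟩
    | cons a t ih =>
        obtain ⟨c, hc⟩ := ih
        simp only [List.map_cons, List.prod_cons, List.sum_cons]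
        rw [hc, weylN_pow_eq]
        simp only [zmod_val_cast_self]
        rw [shiftMat_mul]
        exact ⟨_, rfl⟩
  obtain ⟨c, hc⟩ := key (Finset.univ : Finset ι).toList
  refine ⟨c, ?_⟩
  rw [weylB, hc]
  have hV : (∑ i, b.repr m i • (b i : PhaseSpace d n)) = (m : PhaseSpace d n) := by
    have h := b.sum_repr m
    calc (∑ i, b.repr m i • (b i : PhaseSpace d n))
        = (((∑ i, b.repr m i • b i : M)) : PhaseSpace d n) := by
          push_cast
          rfl
      _ = (m : PhaseSpace d n) := by rw [h]
  have hfst : (List.map (fun i => (b.repr m) i • ((b i : PhaseSpace d n)).1)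
      (Finset.univ : Finset ι).toList).sum = (m : PhaseSpace d n).1 := by
    rw [Finset.sum_map_toList, ← hV, Prod.fst_sum]
    apply Finset.sum_congr rfl
    intro i _
    simp
  have hsnd : (List.map (fun i => (b.repr m) i • ((b i : PhaseSpace d n)).2)
      (Finset.univ : Finset ι).toList).sum = (m : PhaseSpace d n).2 := by
    rw [Finset.sum_map_toList, ← hV, Prod.snd_sum]
    apply Finset.sum_congr rfl
    intro i _
    simp
  rw [hfst, hsnd]
end Rep
section TraceSec

variable {d n : ℕ} [NeZero d] {M : Submodule (ZMod d) (PhaseSpace d n)}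
  {ι : Type*} [Fintype ι]

lemma sum_omegaZ_dot (hd : d.Prime) {p : Fin n → ZMod d} (hp : p ≠ 0) :
    ∑ x : Fin n → ZMod d, omegaZ d (∑ i, p i * x i) = 0 := by
  haveI := Fact.mk hd
  obtain ⟨j, hj⟩ : ∃ j, p j ≠ 0 := by
    by_contra h; push_neg at h; exact hp (funext h)
  refine char_sum_eq_zero hd.one_lt _ ?_ (fun i => if i = j then (p j)⁻¹ else 0) ?_
  · intro a b
    rw [← Finset.sum_add_distrib]
    apply Finset.sum_congr rfl
    intro i _
    simp [Pi.add_apply]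
    ring
  · rw [Finset.sum_eq_single j]
    · simp [mul_inv_cancel₀ hj]
    · intro i _ hij
      simp [hij]
    · intro h
      exact absurd (Finset.mem_univ _) h

lemma trace_shiftMat_q_ne (c : ℂ) (p q : Fin n → ZMod d) (hq : q ≠ 0) :
    (shiftMat d n c p q).trace = 0 := by
  unfold Matrix.trace Matrix.diag shiftMat
  apply Finset.sum_eq_zero
  intro x _
  have h : ¬ (x = x + q) := by
    intro h
    exact hq (left_eq_add.mp h)
  simp [h]

lemma trace_shiftMat_q_zero (c : ℂ) (p : Fin n → ZMod d) :
    (shiftMat d n c p 0).trace = c * ∑ x : Fin n → ZMod d, omegaZ d (∑ i, p i * x i) := by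
  unfold Matrix.trace Matrix.diag shiftMat
  rw [Finset.mul_sum]
  apply Finset.sum_congr rfl
  intro x _
  simp

lemma card_fun_eq : Fintype.card (Fin n → ZMod d) = d ^ n := by
  simp [ZMod.card]

lemma trace_weylB (hd : d.Prime) (b : Module.Basis ι (ZMod d) M) (m : M) :
    (weylB b m).trace = if m = 0 then ((d:ℂ)^n) else 0 := by
  by_cases hm : m = 0
  · rw [hm, weylB_zero, if_pos rfl, Matrix.trace_one, card_fun_eq]
    push_cast
    rfl
  · rw [if_neg hm]
    obtain ⟨c, hc⟩ := weylB_eq_shiftMat b m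
    have hmV : (m : PhaseSpace d n) ≠ 0 := by
      intro h
      exact hm (Subtype.coe_injective h)
    by_cases hq : (m : PhaseSpace d n).2 = 0
    · have hp : (m : PhaseSpace d n).1 ≠ 0 := by
        intro hp
        exact hmV (Prod.ext hp hq)
      rw [hc, hq, trace_shiftMat_q_zero, sum_omegaZ_dot hd hp, mul_zero]
    · rw [hc, trace_shiftMat_q_ne _ _ _ hq]

/- sform linearity lemmas -/
lemma sform_add_left (u v w : PhaseSpace d n) : sform (u + v) w = sform u w + sform v w := by
  unfold sform
  rw [← Finset.sum_add_distrib]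
  apply Finset.sum_congr rfl
  intro i _
  simp
  ring

lemma sform_sub_left (u v w : PhaseSpace d n) : sform (u - v) w = sform u w - sform v w := by
  unfold sform
  rw [← Finset.sum_sub_distrib]
  apply Finset.sum_congr rfl
  intro i _
  simp
  ring

lemma sform_zero_left (w : PhaseSpace d n) : sform 0 w = 0 := by
  unfold sform
  apply Finset.sum_eq_zero
  intro i _
  simp

lemma sform_zero_right (w : PhaseSpace d n) : sform w 0 = 0 := by
  unfold sform
  apply Finset.sum_eq_zero
  intro i _
  simp

lemma sform_add_right (u v w : PhaseSpace d n) : sform u (v + w) = sform u v + sform u w := by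
  unfold sform
  rw [← Finset.sum_add_distrib]
  apply Finset.sum_congr rfl
  intro i _
  simp
  ring

lemma sform_neg_right (u v : PhaseSpace d n) : sform u (-v) = - sform u v := by
  unfold sform
  rw [← Finset.sum_neg_distrib]
  apply Finset.sum_congr rfl
  intro i _
  simp
  ring

lemma sform_smul_right (c : ZMod d) (u v : PhaseSpace d n) :
    sform u (c • v) = c * sform u v := by
  unfold sform
  rw [Finset.mul_sum]
  apply Finset.sum_congr rfl
  intro i _
  simp
  ring

lemma sform_skew (u v : PhaseSpace d n) : sform u v = - sform v u := by
  unfold sform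
  rw [← Finset.sum_neg_distrib]
  apply Finset.sum_congr rfl
  intro i _
  ring

end TraceSec
section Lagr

variable {d n : ℕ} [NeZero d]

lemma sform_smul_left (c : ZMod d) (u v : PhaseSpace d n) : sform (c • u) v = c * sform u v := by
  unfold sform
  rw [Finset.mul_sum]
  apply Finset.sum_congr rfl
  intro i _
  simp
  ring

def sformBilin (d n : ℕ) [NeZero d] : LinearMap.BilinForm (ZMod d) (PhaseSpace d n) :=
  LinearMap.mk₂ (ZMod d) sform sform_add_left sform_smul_left sform_add_right sform_smul_right

lemma exists_sform_ne (hd : d.Prime) {M : Submodule (ZMod d) (PhaseSpace d n)}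
    (hM : IsLagrangian M) {u : PhaseSpace d n} (hu : u ∉ M) :
    ∃ m ∈ M, sform u m ≠ 0 := by
  haveI := Fact.mk hd
  by_contra hcon
  push_neg at hcon
  set B := sformBilin d n with hB
  have hrefl : B.IsRefl := by
    have halt : B.IsAlt := by
      intro x
      show sform x x = 0
      unfold sform
      apply Finset.sum_eq_zero
      intro i _
      ring
    exact halt.isRefl
  have hnd : B.Nondegenerate := by
    show LinearMap.Nondegenerate B
    rw [LinearMap.IsRefl.nondegenerate_iff_separatingLeft hrefl]
    intro x hx
    have h1 : ∀ j, x.1 j = 0 := by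
      intro j
      have h := hx (0, fun i => if i = j then 1 else 0)
      change sform x _ = 0 at h
      unfold sform at h
      rw [Finset.sum_eq_single j] at h
      · simpa using h
      · intro i _ hij
        simp [hij]
      · intro h'
        exact absurd (Finset.mem_univ _) h'
    have h2 : ∀ j, x.2 j = 0 := by
      intro j
      have h := hx ((fun i => if i = j then 1 else 0), 0)
      change sform x _ = 0 at h
      unfold sform at h
      rw [Finset.sum_eq_single j] at h
      · simp at h
        simpa using h
      · intro i _ hij
        simp [hij]
      · intro h'
        exact absurd (Finset.mem_univ _) h'
    exact Prod.ext (funext h1) (funext h2)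
  have hVrank : Module.finrank (ZMod d) (PhaseSpace d n) = n + n := by
    rw [Module.finrank_prod, Module.finrank_pi]
    simp
  have horth : Module.finrank (ZMod d) (B.orthogonal M) = n := by
    rw [LinearMap.BilinForm.finrank_orthogonal hnd, hVrank, hM.2]
    omega
  have hle : M ≤ B.orthogonal M := by
    intro x hx
    rw [LinearMap.BilinForm.mem_orthogonal_iff]
    intro y hy
    exact hM.1 y hy x hx
  have heq : M = B.orthogonal M :=
    Submodule.eq_of_le_of_finrank_le hle (by rw [horth, hM.2])
  have hmem : u ∈ B.orthogonal M := by
    rw [LinearMap.BilinForm.mem_orthogonal_iff]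
    intro m hm
    show sform m u = 0
    rw [sform_skew, hcon m hm, neg_zero]
  rw [← heq] at hmem
  exact hu hmem

end Lagr
section Final

variable {d n : ℕ} [NeZero d] {M : Submodule (ZMod d) (PhaseSpace d n)}
  {ι : Type*} [Fintype ι]

lemma stabRho_eq (b : Module.Basis ι (ZMod d) M) (v : PhaseSpace d n) :
    stabRho b v = ((d : ℂ) ^ n)⁻¹ •
      ∑ m : M, omegaZ d (sform v (m : PhaseSpace d n)) • weylB b m := by
  rw [stabRho, finsum_eq_sum_of_fintype]
  rfl

lemma trace_stabRho_mul (hd : d.Prime) (hM : IsLagrangian M)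
    (b : Module.Basis ι (ZMod d) M) (u v : PhaseSpace d n) :
    (stabRho b u * stabRho b v).trace
      = ((d:ℂ)^n)⁻¹ * ∑ m : M, omegaZ d (sform (u - v) (m : PhaseSpace d n)) := by
  have hdn : ((d:ℂ)^n) ≠ 0 := pow_ne_zero _ (Nat.cast_ne_zero.2 (NeZero.ne d))
  rw [stabRho_eq b u, stabRho_eq b v]
  rw [Matrix.smul_mul, Matrix.mul_smul, smul_smul]
  have hSS : (∑ m : M, omegaZ d (sform u (m:PhaseSpace d n)) • weylB b m)
      * (∑ m' : M, omegaZ d (sform v (m':PhaseSpace d n)) • weylB b m')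
      = ∑ m : M, ∑ m' : M,
          (omegaZ d (sform u (m:PhaseSpace d n)) * omegaZ d (sform v (m':PhaseSpace d n)))
            • (weylB b m * weylB b m') := by
    rw [Finset.sum_mul]
    apply Finset.sum_congr rfl
    intro m _
    rw [Finset.mul_sum]
    apply Finset.sum_congr rfl
    intro m' _
    rw [smul_mul_assoc, mul_smul_comm, smul_smul]
  rw [hSS]
  simp only [Matrix.trace_smul, Matrix.trace_sum]
  have hWW : ∀ m m' : M, (weylB b m * weylB b m').trace
      = if m' = -m then ((d:ℂ)^n) else 0 := by
    intro m m'
    rw [weylB_mul hM.1, trace_weylB hd]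
    by_cases h : m' = -m
    · rw [if_pos h, if_pos (by simp [h])]
    · rw [if_neg h, if_neg (fun hh => h (eq_neg_of_add_eq_zero_right hh))]
  simp only [hWW]
  have hInner : ∀ m : M,
      (∑ m' : M, (omegaZ d (sform u (m:PhaseSpace d n))
          * omegaZ d (sform v (m':PhaseSpace d n)))
        • (if m' = -m then ((d:ℂ)^n) else 0))
      = omegaZ d (sform (u-v) (m:PhaseSpace d n)) * (d:ℂ)^n := by
    intro m
    simp only [smul_eq_mul, mul_ite, mul_zero]
    rw [Finset.sum_ite_eq' Finset.univ (-m)]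
    simp only [Finset.mem_univ, if_true]
    congr 1
    rw [← omegaZ_add]
    congr 1
    have hcoe : ((-m : M) : PhaseSpace d n) = -(m : PhaseSpace d n) := rfl
    rw [hcoe, sform_neg_right, sform_sub_left]
    ring
  simp only [hInner]
  rw [← Finset.sum_mul, smul_eq_mul]
  field_simp

lemma card_M_eq (hd : d.Prime) (hM : IsLagrangian M) (b : Module.Basis ι (ZMod d) M) :
    Fintype.card M = d ^ n := by
  haveI := Fact.mk hd
  rw [Module.card_fintype b, ZMod.card, ← Module.finrank_eq_card_basis b, hM.2]

lemma exists_sform_one_of_ne_zero (hd : d.Prime) {w : PhaseSpace d n} (hw : w ≠ 0) :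
    ∃ v : PhaseSpace d n, sform v w = 1 := by
  haveI := Fact.mk hd
  have hvne : ∃ v : PhaseSpace d n, sform v w ≠ 0 := by
    have h12 : w.1 ≠ 0 ∨ w.2 ≠ 0 := by
      by_contra h
      push_neg at h
      exact hw (Prod.ext h.1 h.2)
    rcases h12 with h1 | h2
    · obtain ⟨j, hj⟩ : ∃ j, w.1 j ≠ 0 := by
        by_contra h; push_neg at h; exact h1 (funext h)
      refine ⟨(0, fun i => if i = j then 1 else 0), ?_⟩
      unfold sform
      rw [Finset.sum_eq_single j]
      · simpa using hj
      · intro i _ hij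
        simp [hij]
      · intro h'
        exact absurd (Finset.mem_univ _) h'
    · obtain ⟨j, hj⟩ : ∃ j, w.2 j ≠ 0 := by
        by_contra h; push_neg at h; exact h2 (funext h)
      refine ⟨((fun i => if i = j then 1 else 0), 0), ?_⟩
      unfold sform
      rw [Finset.sum_eq_single j]
      · simpa using hj
      · intro i _ hij
        simp [hij]
      · intro h'
        exact absurd (Finset.mem_univ _) h'
  obtain ⟨v, hv⟩ := hvne
  refine ⟨(sform v w)⁻¹ • v, ?_⟩
  rw [sform_smul_left, inv_mul_cancel₀ hv]

end Final
/-- **Stabilizer states form orthonormal bases.** Let `M ⊆ ℤ_d^{2n}` be a Lagrangian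
subspace with basis `B`. The states `|M,v⟩` (with projectors
`ρ_{M,v} = d^{-n} Σ_{m∈M} ω^{[v,m]} w_B(m)`) satisfy:
`|M,u⟩ = |M,v⟩` (up to phase, i.e. `ρ_{M,u} = ρ_{M,v}`) iff `u - v ∈ M`;
`⟨M,u|M,v⟩ = 0` (i.e. `tr(ρ_{M,u} ρ_{M,v}) = 0`) otherwise; and the `d^n` distinct
states form an orthonormal basis of `(ℂ^d)^{⊗n}`: summing `ρ_{M,v}` over all
`v ∈ V` (each coset of `V/M` appearing `|M| = d^n` times) gives `d^n · 𝟙`,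
i.e. the distinct projectors resolve the identity. -/
theorem stab_orthonormal_basis (d n : ℕ) (hd : d.Prime) [NeZero d]
    (M : Submodule (ZMod d) (PhaseSpace d n)) (hM : IsLagrangian M)
    {ι : Type*} [Fintype ι] (b : Module.Basis ι (ZMod d) M) :
    (∀ u v : PhaseSpace d n, (stabRho b u = stabRho b v ↔ u - v ∈ M)) ∧
    (∀ u v : PhaseSpace d n, u - v ∉ M → (stabRho b u * stabRho b v).trace = 0) ∧
    (∑ᶠ v : PhaseSpace d n, stabRho b v)
      = ((d : ℂ) ^ n) • (1 : Matrix (Fin n → ZMod d) (Fin n → ZMod d) ℂ) := by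
  haveI := Fact.mk hd
  have hdn : ((d:ℂ)^n) ≠ 0 := pow_ne_zero _ (Nat.cast_ne_zero.2 (NeZero.ne d))
  have part2 : ∀ u v : PhaseSpace d n,
      u - v ∉ M → (stabRho b u * stabRho b v).trace = 0 := by
    intro u v huv
    rw [trace_stabRho_mul hd hM b u v]
    have hsum : ∑ m : M, omegaZ d (sform (u - v) (m : PhaseSpace d n)) = 0 := by
      obtain ⟨m0, hm0, hs⟩ := exists_sform_ne hd hM huv
      refine char_sum_eq_zero hd.one_lt
        (fun m : M => sform (u-v) (m : PhaseSpace d n)) ?_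
        ((sform (u-v) m0)⁻¹ • (⟨m0, hm0⟩ : M)) ?_
      · intro a b'
        show sform (u-v) (((a + b') : M) : PhaseSpace d n) = _
        rw [Submodule.coe_add, sform_add_right]
      · show sform (u-v)
          ((((sform (u-v) m0)⁻¹ • (⟨m0, hm0⟩ : M) : M)) : PhaseSpace d n) = 1
        have hco : ((((sform (u-v) m0)⁻¹ • (⟨m0, hm0⟩ : M) : M)) : PhaseSpace d n)
            = (sform (u-v) m0)⁻¹ • m0 := rfl
        rw [hco, sform_smul_right, inv_mul_cancel₀ hs]
    rw [hsum, mul_zero]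
  have traceself : ∀ v, (stabRho b v * stabRho b v).trace = 1 := by
    intro v
    rw [trace_stabRho_mul hd hM b v v]
    have h1 : ∀ m : M, omegaZ d (sform (v - v) (m : PhaseSpace d n)) = 1 := by
      intro m
      rw [sub_self, sform_zero_left, omegaZ_zero]
    simp only [h1]
    rw [Finset.sum_const, Finset.card_univ, card_M_eq hd hM b]
    simp only [nsmul_eq_mul, mul_one]
    push_cast
    exact inv_mul_cancel₀ hdn
  refine ⟨?_, part2, ?_⟩
  · intro u v
    constructor
    · intro heq
      by_contra huv
      have h0 := part2 u v huv
      rw [heq, traceself v] at h0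
      exact one_ne_zero h0
    · intro huv
      rw [stabRho_eq b u, stabRho_eq b v]
      congr 1
      apply Finset.sum_congr rfl
      intro m _
      have hsf : sform u (m : PhaseSpace d n) = sform v (m : PhaseSpace d n) := by
        have h := hM.1 _ huv _ m.2
        rw [sform_sub_left] at h
        exact sub_eq_zero.mp h
      rw [hsf]
  · rw [finsum_eq_sum_of_fintype]
    calc ∑ v : PhaseSpace d n, stabRho b v
        = ∑ v : PhaseSpace d n, ((d:ℂ)^n)⁻¹ •
            ∑ m : M, omegaZ d (sform v (m : PhaseSpace d n)) • weylB b m := by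
          apply Finset.sum_congr rfl
          intro v _
          rw [stabRho_eq]
      _ = ((d:ℂ)^n)⁻¹ • ∑ v : PhaseSpace d n,
            ∑ m : M, omegaZ d (sform v (m : PhaseSpace d n)) • weylB b m := by
          rw [Finset.smul_sum]
      _ = ((d:ℂ)^n)⁻¹ • ∑ m : M,
            (∑ v : PhaseSpace d n, omegaZ d (sform v (m : PhaseSpace d n))) • weylB b m := by
          rw [Finset.sum_comm]
          congr 1
          apply Finset.sum_congr rfl
          intro m _
          rw [Finset.sum_smul]
      _ = ((d:ℂ)^n)⁻¹ • ((Fintype.card (PhaseSpace d n) : ℂ) • weylB b (0 : M)) := by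
          congr 1
          rw [Finset.sum_eq_single (0 : M)]
          · congr 1
            have h0 : ∀ v : PhaseSpace d n,
                omegaZ d (sform v (((0:M)) : PhaseSpace d n)) = 1 := by
              intro v
              rw [ZeroMemClass.coe_zero, sform_zero_right, omegaZ_zero]
            simp only [h0]
            rw [Finset.sum_const, Finset.card_univ, nsmul_eq_mul, mul_one]
          · intro m _ hm
            have hmV : (m : PhaseSpace d n) ≠ 0 := by
              intro h
              exact hm (Subtype.ext (by simpa using h))
            obtain ⟨v0, hv0⟩ := exists_sform_one_of_ne_zero hd hmV
            have hz : (∑ v : PhaseSpace d n, omegaZ d (sform v (m : PhaseSpace d n))) = 0 :=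
              char_sum_eq_zero hd.one_lt (fun v => sform v (m : PhaseSpace d n))
                (fun a b' => sform_add_left a b' _) v0 hv0
            rw [hz, zero_smul]
          · intro h
            exact absurd (Finset.mem_univ _) h
      _ = ((d : ℂ) ^ n) • (1 : Matrix (Fin n → ZMod d) (Fin n → ZMod d) ℂ) := by
          rw [weylB_zero]
          have hcard : (Fintype.card (PhaseSpace d n) : ℂ) = (d:ℂ)^n * (d:ℂ)^n := by
            rw [Fintype.card_prod, card_fun_eq]
            push_cast
            ring
          rw [hcard, smul_smul]
          congr 1
          field_simp
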